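/- Let M be an irreducible nonnegative n×n real matrix, let u ∈ ℝⁿ be a vector with all coordinates positive, and let λ ∈ ℝ. If Mu ≤ λu entrywise and Mu ≠ λu, then ρ(M) < λ. -/

import Mathlib

open Matrix Polynomial Finset

private theorem root_to_eig (n : ℕ) (A : Matrix (Fin n) (Fin n) ℂ) (z : ℂ)
    (h : A.charpoly.IsRoot z) : ∃ x : Fin n → ℂ, x ≠ 0 ∧ A *ᵥ x = z • x := by
  have hdet : (Matrix.diagonal (fun _ : Fin n => z) - A).det = 0 := by
    have h1 : A.charpoly.eval z = ((evalRingHom z).mapMatrix (charmatrix A)).det := by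
      rw [Matrix.charpoly, ← RingHom.map_det]; rfl
    rw [Polynomial.IsRoot, h1] at h
    convert h using 2
    ext i j
    by_cases hij : i = j <;>
      simp [charmatrix_apply, Matrix.diagonal, hij, Matrix.sub_apply]
  obtain ⟨x, hx0, hx⟩ := Matrix.exists_mulVec_eq_zero_iff.2 hdet
  refine ⟨x, hx0, ?_⟩
  rw [Matrix.sub_mulVec] at hx
  have h2 : Matrix.diagonal (fun _ : Fin n => z) *ᵥ x = z • x := by
    ext i; simp [Matrix.mulVec_diagonal]
  rw [h2] at hx
  ext i
  have h3 := congrFun hx i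
  simp only [Pi.sub_apply, Pi.zero_apply, sub_eq_zero] at h3
  exact h3.symm

/-- If M is an irreducible nonnegative n×n real matrix, u a
positive vector and λ a real with Mu ≤ λu and Mu ≠ λu, then the spectral
radius of M (the maximum modulus of the complex roots of its characteristic
polynomial) is < λ. -/
theorem spectral_radius_lt_of_strict_subEigen
    (n : ℕ) (hn : 1 ≤ n) (M : Matrix (Fin n) (Fin n) ℝ)
    (hnonneg : ∀ i j, 0 ≤ M i j)
    (hirr : ∀ i j, ∃ k : ℕ, 1 ≤ k ∧ 0 < (M ^ k) i j)
    (u : Fin n → ℝ) (hu : ∀ i, 0 < u i) (lam : ℝ)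
    (hle : ∀ i, M.mulVec u i ≤ lam * u i)
    (hne : M.mulVec u ≠ fun i => lam * u i) :
    sSup {x : ℝ | ∃ z : ℂ,
      ((M.map (Complex.ofReal : ℝ → ℂ)).charpoly).IsRoot z ∧
      ‖z‖ = x} < lam := by
  have hne' : Nonempty (Fin n) := ⟨⟨0, hn⟩⟩
  -- nonnegativity of powers
  have hpow : ∀ (k : ℕ) (i j : Fin n), 0 ≤ (M ^ k) i j := by
    intro k
    induction k with
    | zero => intro i j; by_cases hij : i = j <;> simp [Matrix.one_apply, hij]
    | succ k ih =>
      intro i j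
      rw [pow_succ, Matrix.mul_apply]
      exact Finset.sum_nonneg fun l _ => mul_nonneg (ih i l) (hnonneg l j)
  -- the slack vector
  set v : Fin n → ℝ := fun i => lam * u i - M.mulVec u i with hv
  have hv0 : ∀ i, 0 ≤ v i := fun i => sub_nonneg.2 (hle i)
  obtain ⟨j0, hj0⟩ := Function.ne_iff.mp hne
  have hvj0 : 0 < v j0 := sub_pos.2 (lt_of_le_of_ne (hle j0) hj0)
  choose kk hk1 hk2 using fun i => hirr i j0
  set m : ℕ := Finset.univ.sup kk with hm
  set w : Fin n → ℝ := ∑ k ∈ Finset.range (m + 1), (M ^ k) *ᵥ u with hwdef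
  have hw : ∀ i, 0 < w i := by
    intro i
    have : w i = ∑ k ∈ Finset.range (m + 1), ((M ^ k) *ᵥ u) i := by
      rw [hwdef]; simp [Finset.sum_apply]
    rw [this]
    apply Finset.sum_pos'
    · intro k _
      simpa [Matrix.mulVec, dotProduct] using
        Finset.sum_nonneg fun l _ => mul_nonneg (hpow k i l) (hu l).le
    · refine ⟨0, Finset.mem_range.2 (Nat.succ_pos m), ?_⟩
      simp [Matrix.mulVec_one, Matrix.one_mulVec]
      exact (hu i)
  -- key identity
  have hkv : ∀ k : ℕ, (M ^ k) *ᵥ v = lam • ((M ^ k) *ᵥ u) - (M ^ (k + 1)) *ᵥ u := by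
    intro k
    have : v = lam • u - M *ᵥ u := by ext i; simp [hv]
    rw [this, Matrix.mulVec_sub, Matrix.mulVec_smul, Matrix.mulVec_mulVec, ← pow_succ]
  have hkey : lam • w - M *ᵥ w = ∑ k ∈ Finset.range (m + 1), (M ^ k) *ᵥ v := by
    have hMw : M *ᵥ w = ∑ k ∈ Finset.range (m + 1), (M ^ (k + 1)) *ᵥ u := by
      rw [hwdef]
      rw [show (M *ᵥ ∑ k ∈ Finset.range (m + 1), (M ^ k) *ᵥ u) =
          M.mulVecLin (∑ k ∈ Finset.range (m + 1), (M ^ k) *ᵥ u) from rfl, map_sum]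
      refine Finset.sum_congr rfl fun k _ => ?_
      simp [Matrix.mulVecLin_apply, Matrix.mulVec_mulVec, ← pow_succ']
    rw [hMw, hwdef, Finset.smul_sum, ← Finset.sum_sub_distrib]
    exact (Finset.sum_congr rfl fun k _ => (hkv k).symm)
  have hstrict : ∀ i, M.mulVec w i < lam * w i := by
    intro i
    have h1 : lam * w i - M.mulVec w i =
        ∑ k ∈ Finset.range (m + 1), ((M ^ k) *ᵥ v) i := by
      have := congrFun hkey i
      simpa [Finset.sum_apply] using this
    have h2 : 0 < ∑ k ∈ Finset.range (m + 1), ((M ^ k) *ᵥ v) i := by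
      apply Finset.sum_pos'
      · intro k _
        simpa [Matrix.mulVec, dotProduct] using
          Finset.sum_nonneg fun l _ => mul_nonneg (hpow k i l) (hv0 l)
      · refine ⟨kk i, Finset.mem_range.2 (Nat.lt_succ_of_le (Finset.le_sup (Finset.mem_univ i))), ?_⟩
        have : (M ^ kk i) i j0 * v j0 ≤ ((M ^ kk i) *ᵥ v) i := by
          refine Finset.single_le_sum (fun l _ => mul_nonneg (hpow _ i l) (hv0 l))
            (Finset.mem_univ j0)
        exact lt_of_lt_of_le (mul_pos (hk2 i) hvj0) this
    linarith [h1 ▸ h2]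
  -- the strict bound lam'
  set lam' : ℝ := Finset.univ.sup' Finset.univ_nonempty (fun i => M.mulVec w i / w i) with hlam'def
  have hlam'lt : lam' < lam := by
    rw [hlam'def, Finset.sup'_lt_iff]
    intro i _
    rw [div_lt_iff₀ (hw i)]
    exact hstrict i
  have hbound : ∀ i, M.mulVec w i ≤ lam' * w i := by
    intro i
    have h := Finset.le_sup' (fun i => M.mulVec w i / w i) (Finset.mem_univ i)
    rw [← hlam'def] at h
    calc M.mulVec w i = (M.mulVec w i / w i) * w i := (div_mul_cancel₀ _ (hw i).ne').symm
    _ ≤ lam' * w i := mul_le_mul_of_nonneg_right h (hw i).le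
  -- every eigenvalue modulus is ≤ lam'
  have heig : ∀ z : ℂ, ((M.map (Complex.ofReal : ℝ → ℂ)).charpoly).IsRoot z →
      ‖z‖ ≤ lam' := by
    intro z hz
    obtain ⟨x, hx0, hx⟩ := root_to_eig n _ z hz
    set c : ℝ := Finset.univ.sup' Finset.univ_nonempty (fun i => ‖x i‖ / w i)
      with hcdef
    obtain ⟨i0, _, hi0⟩ := Finset.exists_mem_eq_sup' Finset.univ_nonempty
      (fun i => ‖x i‖ / w i)
    have hxle : ∀ j, ‖x j‖ ≤ c * w j := by
      intro j
      have h := Finset.le_sup' (fun i => ‖x i‖ / w i) (Finset.mem_univ j)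
      rw [← hcdef] at h
      calc ‖x j‖ = (‖x j‖ / w j) * w j :=
        (div_mul_cancel₀ _ (hw j).ne').symm
      _ ≤ c * w j := mul_le_mul_of_nonneg_right h (hw j).le
    have hcpos : 0 < c := by
      obtain ⟨j1, hj1⟩ := Function.ne_iff.mp hx0
      have hj1' : x j1 ≠ 0 := by simpa using hj1
      have h1 : 0 < ‖x j1‖ / w j1 :=
        div_pos (by simpa using (norm_pos_iff.mpr hj1')) (hw j1)
      have h2 := Finset.le_sup' (fun i => ‖x i‖ / w i) (Finset.mem_univ j1)
      rw [← hcdef] at h2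
      exact lt_of_lt_of_le h1 h2
    have hxi0 : ‖x i0‖ = c * w i0 := by
      rw [hcdef, hi0]; exact (div_mul_cancel₀ _ (hw i0).ne').symm
    have hxi0pos : 0 < ‖x i0‖ := by
      rw [hxi0]; exact mul_pos hcpos (hw i0)
    have hmain : ‖z‖ * ‖x i0‖ ≤ lam' * ‖x i0‖ := by
      have h1 : ‖z‖ * ‖x i0‖ = ‖(z • x) i0‖ := by
        simp [norm_mul]
      have h2 : (z • x) i0 = ((M.map (Complex.ofReal : ℝ → ℂ)) *ᵥ x) i0 := by rw [hx]
      have h3 : ‖((M.map (Complex.ofReal : ℝ → ℂ)) *ᵥ x) i0‖ ≤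
          ∑ l, M i0 l * ‖x l‖ := by
        rw [Matrix.mulVec, dotProduct]
        refine le_trans (norm_sum_le _ _) ?_
        refine Finset.sum_le_sum fun l _ => ?_
        rw [Matrix.map_apply, norm_mul, Complex.norm_real, Real.norm_eq_abs,
          abs_of_nonneg (hnonneg i0 l)]
      have h4 : ∑ l, M i0 l * ‖x l‖ ≤ c * M.mulVec w i0 := by
        rw [Matrix.mulVec, dotProduct, Finset.mul_sum]
        refine Finset.sum_le_sum fun l _ => ?_
        calc M i0 l * ‖x l‖ ≤ M i0 l * (c * w l) :=
          mul_le_mul_of_nonneg_left (hxle l) (hnonneg i0 l)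
        _ = c * (M i0 l * w l) := by ring
      have h5 : c * M.mulVec w i0 ≤ c * (lam' * w i0) :=
        mul_le_mul_of_nonneg_left (hbound i0) hcpos.le
      calc ‖z‖ * ‖x i0‖ = ‖(z • x) i0‖ := h1
      _ = ‖((M.map (Complex.ofReal : ℝ → ℂ)) *ᵥ x) i0‖ := by rw [h2]
      _ ≤ ∑ l, M i0 l * ‖x l‖ := h3
      _ ≤ c * M.mulVec w i0 := h4
      _ ≤ c * (lam' * w i0) := h5
      _ = lam' * ‖x i0‖ := by rw [hxi0]; ring
    exact le_of_mul_le_mul_right hmain hxi0pos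
  -- the set of root moduli
  set S := {x : ℝ | ∃ z : ℂ,
      ((M.map (Complex.ofReal : ℝ → ℂ)).charpoly).IsRoot z ∧ ‖z‖ = x} with hS
  have hSne : S.Nonempty := by
    have hdeg : 0 < ((M.map (Complex.ofReal : ℝ → ℂ)).charpoly).degree := by
      rw [Matrix.charpoly_degree_eq_dim, Fintype.card_fin]
      exact_mod_cast hn
    obtain ⟨z, hz⟩ := Complex.exists_root hdeg
    exact ⟨‖z‖, z, hz, rfl⟩
  have hSle : sSup S ≤ lam' := by
    apply csSup_le hSne
    rintro x ⟨z, hz, rfl⟩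
    exact heig z hz
  exact lt_of_le_of_lt hSle hlam'lt
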